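/- Let C = [0, s] × [0, s] be an axis-aligned square of side s, let r > 0 with s/r = k, and let B be a family of closed disks each of radius at least r, each intersecting the boundary of C, and pairwise centre-disjoint. Then |B| ≤ c·(k + 1) for an absolute constant c (e.g. c = 72 suffices when k ≥ 1). -/

import Mathlib

open Real Set Metric

/-- The axis-aligned square `[0, s] × [0, s]` in the Euclidean plane. -/
def square (s : ℝ) : Set (EuclideanSpace ℝ (Fin 2)) :=
  {x | x 0 ∈ Set.Icc 0 s ∧ x 1 ∈ Set.Icc 0 s}

noncomputable section StmtNine
local notation "E" => EuclideanSpace ℝ (Fin 2)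

def phi (x : E) : ℂ := ⟨x 0, x 1⟩

lemma dist_phi (x y : E) : dist x y = ‖phi x - phi y‖ := by
  rw [EuclideanSpace.dist_eq, Complex.norm_def, Complex.normSq_apply]
  simp only [Fin.sum_univ_two, Real.dist_eq, sq_abs, phi, Complex.sub_re, Complex.sub_im]
  ring_nf

lemma re_eq (z w : ℂ) : (z * (starRingEnd ℂ) w).re
    = ‖z‖ * ‖w‖ * Real.cos (z.arg - w.arg) := by
  nth_rewrite 1 [← Complex.norm_mul_exp_arg_mul_I z, ← Complex.norm_mul_exp_arg_mul_I w]
  rw [map_mul, ← Complex.exp_conj]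
  simp only [map_mul, Complex.conj_ofReal, Complex.conj_I, mul_neg]
  rw [show (↑(‖z‖) * Complex.exp (↑z.arg * Complex.I) *
      (↑(‖w‖) * Complex.exp (-(↑w.arg * Complex.I)))) =
      (↑(‖z‖) * ↑(‖w‖)) *
      (Complex.exp (↑z.arg * Complex.I - ↑w.arg * Complex.I)) by
    rw [Complex.exp_sub, Complex.exp_neg]; ring]
  rw [show (↑z.arg * Complex.I - ↑w.arg * Complex.I) = (↑(z.arg - w.arg) : ℂ) * Complex.I by
    push_cast; ring]
  rw [Complex.exp_mul_I]
  simp [Complex.mul_re, ← Complex.ofReal_sub, Complex.cos_ofReal_re, Complex.sin_ofReal_im,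
    Complex.cos_ofReal_im, Complex.sin_ofReal_re]

lemma six (y : E) (S : Finset (EuclideanSpace ℝ (Fin 2) × ℝ))
    (h1 : ∀ b ∈ S, dist y b.1 ≤ b.2)
    (h2 : ∀ b ∈ S, ∀ b' ∈ S, b ≠ b' → dist b.1 b'.1 > b.2 ∧ dist b.1 b'.1 > b'.2) :
    S.card ≤ 6 := by
  classical
  by_cases hy : ∃ b ∈ S, b.1 = y
  · obtain ⟨b, hb, hby⟩ := hy
    have h1' : S.card ≤ 1 := Finset.card_le_one.2 (fun b' hb' b'' hb'' => by
      have key : ∀ c ∈ S, c = b := by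
        intro c hc
        by_contra hne
        have hd := (h2 c hc b hb hne).1
        have : dist c.1 b.1 ≤ c.2 := by rw [hby, dist_comm]; exact h1 c hc
        linarith
      rw [key b' hb', key b'' hb''])
    omega
  · push_neg at hy
    have hcard : (Finset.Icc (-2 : ℤ) 3).card = 6 := by decide
    rw [← hcard]
    apply Finset.card_le_card_of_injOn (fun b => ⌈3 * (phi b.1 - phi y).arg / π⌉)
    · intro b hb
      have ha := Complex.arg_mem_Ioc (phi b.1 - phi y)
      have hπ := Real.pi_pos
      rw [Finset.mem_coe, Finset.mem_Icc]
      beta_reduce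
      constructor
      · have : (-3 : ℝ) < 3 * (phi b.1 - phi y).arg / π := by
          have hb1 : -π < (phi b.1 - phi y).arg := ha.1
          have hb2 : 3 * (phi b.1 - phi y).arg / π - (-3) = 3 * ((phi b.1 - phi y).arg + π) / π := by
            field_simp; ring
          nlinarith [div_pos (by nlinarith : (0:ℝ) < 3 * ((phi b.1 - phi y).arg + π)) hπ]
        have := Int.lt_ceil.2 (show ((-3 : ℤ) : ℝ) < _ by exact_mod_cast this)
        omega
      · apply Int.ceil_le.2
        have : 3 * (phi b.1 - phi y).arg / π ≤ 3 := by
          rw [div_le_iff₀ hπ]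
          nlinarith [ha.2]
        exact_mod_cast this
    · intro b hb b' hb' heq
      by_contra hne
      simp only at heq
      set z := phi b.1 - phi y with hz
      set w := phi b'.1 - phi y with hw
      have hπ := Real.pi_pos
      have hza : ‖z‖ = dist b.1 y := (dist_phi b.1 y).symm
      have hwa : ‖w‖ = dist b'.1 y := (dist_phi b'.1 y).symm
      have hz0 : 0 < ‖z‖ := by
        rw [hza, dist_pos]; exact hy b hb
      have hw0 : 0 < ‖w‖ := by
        rw [hwa, dist_pos]; exact hy b' hb'
      have hzr : ‖z‖ ≤ b.2 := by rw [hza, dist_comm]; exact h1 b hb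
      have hwr : ‖w‖ ≤ b'.2 := by rw [hwa, dist_comm]; exact h1 b' hb'
      have hD : dist b.1 b'.1 = ‖z - w‖ := by
        rw [hz, hw, sub_sub_sub_cancel_right]; exact dist_phi b.1 b'.1
      have hd := h2 b hb b' hb' hne
      -- same ceiling bucket ⇒ small angle difference
      have hang : |z.arg - w.arg| < π / 3 := by
        set a₁ := 3 * z.arg / π
        set a₂ := 3 * w.arg / π
        have d1 : a₁ ≤ ⌈a₁⌉ := Int.le_ceil a₁
        have d2 : a₂ ≤ ⌈a₂⌉ := Int.le_ceil a₂
        have d3 : (⌈a₁⌉ : ℝ) - 1 < a₁ := by have := Int.ceil_lt_add_one a₁; linarith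
        have d4 : (⌈a₂⌉ : ℝ) - 1 < a₂ := by have := Int.ceil_lt_add_one a₂; linarith
        have h12 : |a₁ - a₂| < 1 := by
          rw [abs_sub_lt_iff]
          constructor
          · rw [heq] at d1; linarith
          · rw [heq] at d3; linarith
        have hrw : a₁ - a₂ = 3 / π * (z.arg - w.arg) := by
          simp only [a₁, a₂]; ring
        rw [hrw, abs_mul, abs_of_pos (by positivity : (0:ℝ) < 3 / π),
          div_mul_eq_mul_div, div_lt_one hπ] at h12
        linarith
      have hc : Real.cos (z.arg - w.arg) > 1/2 := by
        have hmem1 : |z.arg - w.arg| ∈ Icc 0 π := ⟨abs_nonneg _, by nlinarith [hang]⟩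
        have hmem2 : π / 3 ∈ Icc 0 π := ⟨by positivity, by linarith⟩
        have := Real.strictAntiOn_cos hmem1 hmem2 hang
        rw [Real.cos_pi_div_three] at this
        rw [← Real.cos_abs]
        linarith
      have hre := re_eq z w
      have hsq : ‖z - w‖ ^ 2 =
          ‖z‖ ^ 2 + ‖w‖ ^ 2 - 2 * (z * (starRingEnd ℂ) w).re := by
        rw [Complex.sq_norm, Complex.sq_norm, Complex.sq_norm, Complex.normSq_sub]
      have hD1 : dist b.1 b'.1 ^ 2 > ‖z‖ ^ 2 := by
        nlinarith [hd.1, hzr, hz0, dist_nonneg (x := b.1) (y := b'.1)]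
      have hD2 : dist b.1 b'.1 ^ 2 > ‖w‖ ^ 2 := by
        nlinarith [hd.2, hwr, hw0, dist_nonneg (x := b.1) (y := b'.1)]
      rw [hD, hsq, hre] at hD1 hD2
      nlinarith [mul_pos hz0 hw0, hD1, hD2, hc]

def pt (u v : ℝ) : E := (WithLp.equiv 2 (Fin 2 → ℝ)).symm ![u, v]

@[simp] lemma pt0 (u v : ℝ) : pt u v 0 = u := rfl
@[simp] lemma pt1 (u v : ℝ) : pt u v 1 = v := rfl

lemma coord_le (x y : E) (i : Fin 2) : |x i - y i| ≤ dist x y := by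
  rw [EuclideanSpace.dist_eq, ← Real.sqrt_sq_eq_abs]
  apply Real.sqrt_le_sqrt
  rw [show (x i - y i)^2 = dist (x i) (y i) ^2 by rw [Real.dist_eq, sq_abs]]
  exact Finset.single_le_sum (f := fun j => dist (x j) (y j) ^ 2)
    (fun j _ => sq_nonneg _) (Finset.mem_univ i)

lemma mem_frontier_square (s : ℝ) (x : E) (hx : x ∈ frontier (square s)) :
    (x 0 ∈ Icc 0 s ∧ x 1 ∈ Icc 0 s) ∧ (x 0 = 0 ∨ x 0 = s ∨ x 1 = 0 ∨ x 1 = s) := by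
  have hc0 : Continuous (fun y : E => y 0) := (EuclideanSpace.proj (0 : Fin 2)).continuous
  have hc1 : Continuous (fun y : E => y 1) := (EuclideanSpace.proj (1 : Fin 2)).continuous
  have hcl : IsClosed (square s) :=
    (isClosed_Icc.preimage hc0).inter (isClosed_Icc.preimage hc1)
  have hmem : x ∈ square s := by
    have h := hx.1
    rwa [hcl.closure_eq] at h
  refine ⟨⟨hmem.1, hmem.2⟩, ?_⟩
  by_contra h
  push_neg at h
  obtain ⟨h1, h2, h3, h4⟩ := h
  have hU : IsOpen {y : E | y 0 ∈ Ioo 0 s ∧ y 1 ∈ Ioo 0 s} :=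
    (isOpen_Ioo.preimage hc0).inter (isOpen_Ioo.preimage hc1)
  have hxU : x ∈ {y : E | y 0 ∈ Ioo 0 s ∧ y 1 ∈ Ioo 0 s} :=
    ⟨⟨lt_of_le_of_ne hmem.1.1 (Ne.symm h1), lt_of_le_of_ne hmem.1.2 h2⟩,
     ⟨lt_of_le_of_ne hmem.2.1 (Ne.symm h3), lt_of_le_of_ne hmem.2.2 h4⟩⟩
  have : x ∈ interior (square s) := by
    apply interior_maximal ?_ hU hxU
    intro y hy
    have hy' : y 0 ∈ Ioo 0 s ∧ y 1 ∈ Ioo 0 s := hy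
    exact ⟨⟨hy'.1.1.le, hy'.1.2.le⟩, ⟨hy'.2.1.le, hy'.2.2.le⟩⟩
  exact hx.2 this

lemma inner_point (r R : ℝ) (hr : 0 < r) (hR : r ≤ R) (p c : E) (hpc : dist p c ≤ R) :
    ∃ q : E, dist q p ≤ r ∧ dist q c ≤ R - r := by
  by_cases h : dist p c ≤ r
  · exact ⟨c, by rwa [dist_comm], by simp; linarith⟩
  · push_neg at h
    have hd : 0 < dist p c := lt_trans hr h
    refine ⟨p + (r / dist p c) • (c - p), ?_, ?_⟩
    · rw [dist_eq_norm, add_sub_cancel_left, norm_smul]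
      rw [show ‖c - p‖ = dist p c by rw [← dist_eq_norm, dist_comm]]
      rw [Real.norm_eq_abs, abs_of_pos (by positivity)]
      rw [div_mul_cancel₀ _ (ne_of_gt hd)]
    · have key : p + (r / dist p c) • (c - p) - c = (1 - r / dist p c) • (p - c) := by
        module
      rw [dist_eq_norm, key, norm_smul]
      rw [show ‖p - c‖ = dist p c from (dist_eq_norm p c).symm]
      rw [Real.norm_eq_abs, abs_of_nonneg (by rw [sub_nonneg, div_le_one hd]; exact h.le)]
      have : (1 - r / dist p c) * dist p c = dist p c - r := by
        field_simp
      rw [this]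
      linarith

def nn (s r : ℝ) : ℕ := ⌈(s / r + 2) / Real.sqrt 3⌉₊

def npt (s r : ℝ) (a e σ : Bool) (i : ℕ) : E :=
  if a then pt (Real.sqrt 3 * r * (i + 1/2) - r) ((if e then s else 0) + (if σ then r/2 else -(r/2)))
  else pt ((if e then s else 0) + (if σ then r/2 else -(r/2))) (Real.sqrt 3 * r * (i + 1/2) - r)

lemma sign_helper (r : ℝ) (hr : 0 < r) (w : ℝ) (hw : |w| ≤ r) :
    ∃ σ : Bool, (w - (if σ then r/2 else -(r/2)))^2 ≤ (r/2)^2 := by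
  rw [abs_le] at hw
  rcases le_or_gt 0 w with h | h
  · exact ⟨true, by simp only [ite_true]; nlinarith⟩
  · exact ⟨false, by simp only [Bool.false_eq_true, ite_false]; nlinarith⟩

lemma index_helper (s r : ℝ) (hr : 0 < r) (hs : 0 ≤ s) (t : ℝ) (ht : -r ≤ t) (ht2 : t ≤ s + r) :
    ∃ i : ℕ, i < nn s r ∧ (t - (Real.sqrt 3 * r * (i + 1/2) - r))^2 ≤ 3/4 * r^2 := by
  have h30 : (0:ℝ) < Real.sqrt 3 := Real.sqrt_pos.2 (by norm_num)
  have hd : 0 < Real.sqrt 3 * r := by positivity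
  have hd2 : (Real.sqrt 3 * r)^2 = 3 * r^2 := by
    rw [mul_pow, Real.sq_sqrt (by norm_num : (3:ℝ) ≥ 0)]
  set d := Real.sqrt 3 * r with hdd
  set x := (t + r) / d with hx
  have hx0 : 0 ≤ x := div_nonneg (by linarith) hd.le
  have hdx : d * x = t + r := by rw [hx, mul_div_cancel₀ _ hd.ne']
  have hxle : x ≤ (s / r + 2) / Real.sqrt 3 := by
    rw [hx, hdd, div_le_div_iff₀ (by positivity) h30]
    have h' : (s / r + 2) * r = s + 2 * r := by field_simp
    nlinarith [h']
  have hn1 : 1 ≤ nn s r := Nat.one_le_ceil_iff.2 (by positivity)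
  by_cases hc : ⌊x⌋₊ < nn s r
  · refine ⟨⌊x⌋₊, hc, ?_⟩
    have hu1 : (⌊x⌋₊ : ℝ) ≤ x := Nat.floor_le hx0
    have hu2 : x < ⌊x⌋₊ + 1 := Nat.lt_floor_add_one x
    have key : d^2 * (x - ⌊x⌋₊) * (1 - (x - ⌊x⌋₊)) ≥ 0 :=
      mul_nonneg (mul_nonneg (sq_nonneg d) (by linarith)) (by linarith)
    have ht' : t = d * x - r := by linarith [hdx]
    have hexp : t - (d * ((⌊x⌋₊:ℝ) + 1/2) - r) = d * (x - ⌊x⌋₊) - d / 2 := by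
      rw [ht']; ring
    rw [hexp]
    nlinarith [key, hd2]
  · push_neg at hc
    have hxn : (nn s r : ℝ) ≤ x := le_trans (by exact_mod_cast Nat.cast_le.2 hc) (Nat.floor_le hx0)
    have hxn2 : x ≤ (nn s r : ℝ) := le_trans hxle (Nat.le_ceil _)
    have hxeq : x = (nn s r : ℝ) := le_antisymm hxn2 hxn
    refine ⟨nn s r - 1, by omega, ?_⟩
    have hcast : ((nn s r - 1 : ℕ) : ℝ) = (nn s r : ℝ) - 1 := by
      rw [Nat.cast_sub hn1]; norm_num
    rw [hcast]
    have heq2 : t + r = d * (nn s r : ℝ) := by rw [← hdx, hxeq]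
    have ht' : t = d * (nn s r : ℝ) - r := by linarith
    have hexp : t - (d * ((nn s r : ℝ) - 1 + 1/2) - r) = d / 2 := by
      rw [ht']; ring
    rw [hexp]
    nlinarith [hd2]

lemma dist_le_of_coords (y q : E) (r : ℝ) (hr : 0 ≤ r)
    (h : (y 0 - q 0)^2 + (y 1 - q 1)^2 ≤ r^2) : dist y q ≤ r := by
  rw [EuclideanSpace.dist_eq, Fin.sum_univ_two, Real.dist_eq, Real.dist_eq, sq_abs, sq_abs]
  calc Real.sqrt ((y 0 - q 0)^2 + (y 1 - q 1)^2) ≤ Real.sqrt (r^2) := Real.sqrt_le_sqrt h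
    _ = r := Real.sqrt_sq hr

lemma cover (s r R : ℝ) (hr : 0 < r) (hs : 0 ≤ s) (hrR : r ≤ R) (c : E)
    (hne : (Metric.closedBall c R ∩ frontier (square s)).Nonempty) :
    ∃ a e σ : Bool, ∃ i : ℕ, i < nn s r ∧ dist (npt s r a e σ i) c ≤ R := by
  obtain ⟨p, hp1, hp2⟩ := hne
  rw [mem_closedBall] at hp1
  obtain ⟨⟨hpx, hpy⟩, hedge⟩ := mem_frontier_square s p hp2
  obtain ⟨q, hq1, hq2⟩ := inner_point r R hr hrR p c hp1
  have hq0' : |q 0 - p 0| ≤ r := le_trans (coord_le q p 0) hq1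
  have hq1' : |q 1 - p 1| ≤ r := le_trans (coord_le q p 1) hq1
  have hcase : ∃ a e : Bool, p (if a then 1 else 0) = (if e then s else 0) ∧
      p (if a then 0 else 1) ∈ Icc 0 s := by
    rcases hedge with hv | hv | hv | hv
    · exact ⟨false, false, by simpa using hv, by simpa using hpy⟩
    · exact ⟨false, true, by simpa using hv, by simpa using hpy⟩
    · exact ⟨true, false, by simpa using hv, by simpa using hpx⟩
    · exact ⟨true, true, by simpa using hv, by simpa using hpx⟩
  obtain ⟨a, e, hve, hfree⟩ := hcase
  cases a
  · -- fixed coordinate is 0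
    have hve' : p 0 = if e = true then s else 0 := hve
    have hf1 : 0 ≤ p 1 := hfree.1
    have hf2 : p 1 ≤ s := hfree.2
    obtain ⟨σ, hσ⟩ := sign_helper r hr (q 0 - p 0) hq0'
    rw [abs_le] at hq1'
    obtain ⟨i, hi, hix⟩ := index_helper s r hr hs (q 1)
      (by linarith [hq1'.1]) (by linarith [hq1'.2])
    refine ⟨false, e, σ, i, hi, ?_⟩
    have hd1 : dist (npt s r false e σ i) q ≤ r := by
      apply dist_le_of_coords _ _ r hr.le
      have e0 : npt s r false e σ i 0
          = (if e then s else 0) + (if σ then r/2 else -(r/2)) := by simp [npt]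
      have e1 : npt s r false e σ i 1 = Real.sqrt 3 * r * (i + 1/2) - r := by simp [npt]
      rw [e0, e1, ← hve']
      nlinarith [hσ, hix]
    calc dist (npt s r false e σ i) c ≤ dist (npt s r false e σ i) q + dist q c :=
          dist_triangle _ _ _
      _ ≤ R := by linarith
  · -- fixed coordinate is 1
    have hve' : p 1 = if e = true then s else 0 := hve
    have hf1 : 0 ≤ p 0 := hfree.1
    have hf2 : p 0 ≤ s := hfree.2
    obtain ⟨σ, hσ⟩ := sign_helper r hr (q 1 - p 1) hq1'
    rw [abs_le] at hq0'
    obtain ⟨i, hi, hix⟩ := index_helper s r hr hs (q 0)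
      (by linarith [hq0'.1]) (by linarith [hq0'.2])
    refine ⟨true, e, σ, i, hi, ?_⟩
    have hd1 : dist (npt s r true e σ i) q ≤ r := by
      apply dist_le_of_coords _ _ r hr.le
      have e0 : npt s r true e σ i 1
          = (if e then s else 0) + (if σ then r/2 else -(r/2)) := by simp [npt]
      have e1 : npt s r true e σ i 0 = Real.sqrt 3 * r * (i + 1/2) - r := by simp [npt]
      rw [e0, e1, ← hve']
      nlinarith [hσ, hix]
    calc dist (npt s r true e σ i) c ≤ dist (npt s r true e σ i) q + dist q c :=
          dist_triangle _ _ _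
      _ ≤ R := by linarith

end StmtNine

set_option maxHeartbeats 2000000 in
/-- A centre-disjoint family of closed disks, each of radius at least `r` and each intersecting
the boundary of the square `[0, s]²` with `k = s / r ≥ 1`, has at most `72 (k + 1)` members. -/
theorem stmt9 (s r : ℝ) (hr : 0 < r) (hk : 1 ≤ s / r)
    (B : Finset (EuclideanSpace ℝ (Fin 2) × ℝ))
    (hrad : ∀ b ∈ B, r ≤ b.2)
    (hmeet : ∀ b ∈ B, (Metric.closedBall b.1 b.2 ∩ frontier (square s)).Nonempty)
    (hcd : ∀ b ∈ B, ∀ b' ∈ B, b ≠ b' → dist b.1 b'.1 > b.2 ∧ dist b.1 b'.1 > b'.2) :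
    (B.card : ℝ) ≤ 72 * (s / r + 1) := by
  classical
  have hs : 0 ≤ s := by
    have h1 : 1 * r ≤ s := (le_div_iff₀ hr).1 hk
    nlinarith
  set N : Finset (EuclideanSpace ℝ (Fin 2)) :=
    Finset.image (fun z : Bool × Bool × Bool × Fin (nn s r) =>
      npt s r z.1 z.2.1 z.2.2.1 z.2.2.2) Finset.univ with hN
  have hex : ∀ b ∈ B, ∃ y ∈ N, dist y b.1 ≤ b.2 := by
    intro b hb
    obtain ⟨a, e, σ, i, hi, hdist⟩ := cover s r b.2 hr hs (hrad b hb) b.1 (hmeet b hb)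
    exact ⟨npt s r a e σ i,
      Finset.mem_image.2 ⟨(a, e, σ, ⟨i, hi⟩), Finset.mem_univ _, rfl⟩, hdist⟩
  choose! f hf1 hf2 using hex
  have hmemN : ∀ b ∈ B, f b ∈ N := hf1
  have hcard := Finset.card_eq_sum_card_fiberwise hmemN
  have hfiber : ∀ y ∈ N, (B.filter (fun b => f b = y)).card ≤ 6 := by
    intro y hy
    apply six y
    · intro b hb
      rw [Finset.mem_filter] at hb
      have := hf2 b hb.1
      rwa [hb.2] at this
    · intro b hb b' hb' hne
      exact hcd b (Finset.mem_filter.1 hb).1 b' (Finset.mem_filter.1 hb').1 hne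
  have hsum : B.card ≤ 6 * N.card := by
    rw [hcard]
    calc ∑ y ∈ N, (B.filter (fun b => f b = y)).card ≤ ∑ y ∈ N, 6 :=
          Finset.sum_le_sum hfiber
      _ = 6 * N.card := by rw [Finset.sum_const, smul_eq_mul, mul_comm]
  have hNcard : N.card ≤ 8 * nn s r := by
    calc N.card ≤ (Finset.univ : Finset (Bool × Bool × Bool × Fin (nn s r))).card :=
          Finset.card_image_le
      _ = 8 * nn s r := by simp [Finset.card_univ]; ring
  have hB : B.card ≤ 48 * nn s r := by
    calc B.card ≤ 6 * N.card := hsum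
      _ ≤ 6 * (8 * nn s r) := by omega
      _ = 48 * nn s r := by ring
  have hnnR : (nn s r : ℝ) < (s / r + 2) / Real.sqrt 3 + 1 := by
    unfold nn
    exact Nat.ceil_lt_add_one (by positivity)
  have h3 : (1.7 : ℝ) ≤ Real.sqrt 3 := by
    nlinarith [Real.sq_sqrt (show (0:ℝ) ≤ 3 by norm_num), Real.sqrt_nonneg 3]
  have hdiv : (s / r + 2) / Real.sqrt 3 ≤ (s / r + 2) / 1.7 := by
    apply div_le_div_of_nonneg_left (by linarith) (by norm_num) h3
  have hBR : (B.card : ℝ) ≤ 48 * ((s / r + 2) / 1.7 + 1) := by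
    have : (B.card : ℝ) ≤ 48 * (nn s r : ℝ) := by exact_mod_cast hB
    nlinarith [hnnR, hdiv]
  have hk' : (1:ℝ) ≤ s / r := hk
  rw [show (s / r + 2) / 1.7 = (s / r + 2) * (10/17) by ring] at hBR
  linarith
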